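/- Let (X,d) be a complete separable metric space, C a countable dense subset of X, and ℬ the countable family of all sets of the form ⋃_{i=1}^m B(x_i, 1/n) for finite families x_1,…,x_m ∈ C and n∈ℕ, where B(x,r) is the open ball of radius r around x. For Borel probability measures P, Q on X, Q is NOT absolutely continuous with respect to P if and only if there exists N∈ℕ such that for every n∈ℕ there exists B_n ∈ ℬ with P[B_n] ≤ 1/n and Q[B_n] ≥ 1/N. -/

import Mathlib

open MeasureTheory Set
open scoped NNReal ENNReal

/-- **A countable Borel test for non-absolute-continuity.** Let `(X,d)` be a complete
separable metric space, `C` a countable dense subset, and consider the countable family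
of all finite unions `⋃_{i=1}^k B(x_i, 1/m)` of open balls with centers in `C` and
rational radii `1/m`. For Borel probability measures `P, Q` on `X`, `Q` is *not*
absolutely continuous with respect to `P` if and only if there exists `N ∈ ℕ` such that
for every `n ∈ ℕ` there is a set `B_n` in the family with `P[B_n] ≤ 1/n` and
`Q[B_n] ≥ 1/N`. -/
theorem statement8 {X : Type*} [MetricSpace X] [CompleteSpace X]
    [TopologicalSpace.SeparableSpace X] [MeasurableSpace X] [BorelSpace X]
    (C : Set X) (hCcount : C.Countable) (hCdense : Dense C)
    (P Q : Measure X) [IsProbabilityMeasure P] [IsProbabilityMeasure Q] :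
    ¬ Q ≪ P ↔
      ∃ N : ℕ, 0 < N ∧ ∀ n : ℕ, 0 < n →
        ∃ (s : Finset X) (m : ℕ), (↑s : Set X) ⊆ C ∧ 0 < m ∧
          P (⋃ x ∈ s, Metric.ball x (1 / (m : ℝ))) ≤ 1 / (n : ℝ≥0∞) ∧
          1 / (N : ℝ≥0∞) ≤ Q (⋃ x ∈ s, Metric.ball x (1 / (m : ℝ))) := by
  classical
  constructor
  · -- forward direction
    intro hQP
    obtain ⟨s₀, hPs₀, hQs₀⟩ : ∃ s, P s = 0 ∧ Q s ≠ 0 := by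
      by_contra h
      push_neg at h
      exact hQP fun s hs => h s hs
    set t : Set X := toMeasurable P s₀ with ht
    have hPt : P t = 0 := by rw [ht, measure_toMeasurable]; exact hPs₀
    have hQt : Q t ≠ 0 := fun h =>
      hQs₀ (le_antisymm (h ▸ measure_mono (subset_toMeasurable P s₀)) (zero_le))
    obtain ⟨N, hN⟩ : ∃ N : ℕ, (N : ℝ≥0∞)⁻¹ < Q t := ENNReal.exists_inv_nat_lt hQt
    have hNpos : 0 < N := by
      rcases Nat.eq_zero_or_pos N with h | h
      · rw [h] at hN
        simp only [Nat.cast_zero, ENNReal.inv_zero] at hN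
        exact absurd (hN.trans_le le_top) (lt_irrefl _)
      · exact h
    refine ⟨N, hNpos, fun n hn => ?_⟩
    -- outer regularity: open U ⊇ t with P U < 1/n
    have hn' : (0 : ℝ≥0∞) < (n : ℝ≥0∞)⁻¹ := by
      simp [ENNReal.inv_pos]
    obtain ⟨U, htU, hUopen, hPU⟩ : ∃ U ⊇ t, IsOpen U ∧ P U < (n : ℝ≥0∞)⁻¹ :=
      Set.exists_isOpen_lt_of_lt t _ (hPt ▸ hn')
    -- monotone family of same-radius ball unions exhausting U
    set D : ℕ → Set X := fun j => {c ∈ C | Metric.ball c (3 / 2 ^ j) ⊆ U} with hDdef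
    set T : ℕ → Set X := fun j => ⋃ c ∈ D j, Metric.ball c (1 / (2 ^ j : ℝ)) with hT
    have hTsubU : ∀ j, T j ⊆ U := by
      intro j
      refine iUnion₂_subset fun c hc => ?_
      refine (Metric.ball_subset_ball ?_).trans hc.2
      have h2 : (0:ℝ) < 2 ^ j := by positivity
      rw [div_le_div_iff₀ h2 h2]
      nlinarith
    have hTmono : Monotone T := by
      have key : ∀ j, T j ⊆ T (j + 1) := by
        intro j x hx
        simp only [hT, hDdef, mem_iUnion, mem_setOf_eq, exists_prop] at hx ⊢
        obtain ⟨c, ⟨hcC, hcU⟩, hxc⟩ := hx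
        obtain ⟨c', hc'C, hxc'⟩ : ∃ c' ∈ C, dist x c' < 1 / 2 ^ (j+1) :=
          Metric.mem_closure_iff.1 (hCdense x) _ (by positivity)
        refine ⟨c', ⟨hc'C, ?_⟩, ?_⟩
        · intro y hy
          apply hcU
          rw [Metric.mem_ball] at hy ⊢
          have hxcball : dist x c < 1 / 2 ^ j := by rwa [Metric.mem_ball] at hxc
          have htri : dist y c ≤ dist y c' + dist c' x + dist x c := dist_triangle4 y c' x c
          have h2 : (2:ℝ) ^ (j+1) = 2 * 2 ^ j := by ring
          have hc'x : dist c' x < 1 / 2 ^ (j+1) := by rwa [dist_comm] at hxc'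
          calc dist y c ≤ dist y c' + dist c' x + dist x c := htri
            _ < 3 / 2 ^ (j+1) + 1 / 2 ^ (j+1) + 1 / 2 ^ j :=
                add_lt_add (add_lt_add hy hc'x) hxcball
            _ = 3 / 2 ^ j := by rw [h2]; field_simp; ring
        · rw [Metric.mem_ball]
          exact hxc'
      exact monotone_nat_of_le_succ key
    have hTunion : (⋃ j, T j) = U := by
      apply Subset.antisymm (iUnion_subset hTsubU)
      intro x hx
      obtain ⟨ε, hε, hball⟩ := Metric.isOpen_iff.1 hUopen x hx
      obtain ⟨j, hj⟩ : ∃ j : ℕ, (4 : ℝ) / 2 ^ j < ε := by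
        obtain ⟨j, hj⟩ := pow_unbounded_of_one_lt (4 / ε) (one_lt_two (α := ℝ))
        refine ⟨j, ?_⟩
        rw [div_lt_iff₀ (by positivity)]
        rw [div_lt_iff₀ hε] at hj
        nlinarith [pow_pos (zero_lt_two (α := ℝ)) j]
      obtain ⟨c, hcC, hxc⟩ : ∃ c ∈ C, dist x c < 1 / 2 ^ j :=
        Metric.mem_closure_iff.1 (hCdense x) _ (by positivity)
      refine mem_iUnion.2 ⟨j, ?_⟩
      simp only [hT, hDdef, mem_iUnion, mem_setOf_eq, exists_prop]
      refine ⟨c, ⟨hcC, fun y hy => hball ?_⟩, ?_⟩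
      · rw [Metric.mem_ball] at hy ⊢
        have hcx : dist c x < 1 / 2 ^ j := by rwa [dist_comm] at hxc
        calc dist y x ≤ dist y c + dist c x := dist_triangle y c x
          _ < 3 / 2 ^ j + 1 / 2 ^ j := add_lt_add hy hcx
          _ = 4 / 2 ^ j := by ring
          _ < ε := hj
      · rw [Metric.mem_ball]; exact hxc
    have hQU : (N : ℝ≥0∞)⁻¹ < Q U := hN.trans_le (measure_mono htU)
    rw [← hTunion, hTmono.measure_iUnion, lt_iSup_iff] at hQU
    obtain ⟨j, hj⟩ := hQU
    -- now approximate T j from inside by finite unions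
    have hDcount : (D j).Countable := hCcount.mono fun c hc => hc.1
    have hDne : (D j).Nonempty := by
      by_contra hne
      rw [not_nonempty_iff_eq_empty] at hne
      have hTe : T j = ∅ := by rw [hT]; simp [hne]
      rw [hTe] at hj
      simp at hj
    obtain ⟨e, he⟩ := hDcount.exists_eq_range hDne
    have hTj : T j = ⋃ k, Metric.ball (e k) (1 / (2 ^ j : ℝ)) := by
      rw [hT]
      simp only [he, biUnion_range]
    set G : ℕ → Set X := fun K => ⋃ k ∈ Finset.range K, Metric.ball (e k) (1 / (2 ^ j : ℝ))
      with hG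
    have hGmono : Monotone G := fun a b hab =>
      biUnion_subset_biUnion_left (Finset.range_subset_range.2 hab)
    have hGunion : (⋃ K, G K) = T j := by
      rw [hTj]
      ext x
      simp only [hG, mem_iUnion, Finset.mem_range, exists_prop]
      constructor
      · rintro ⟨K, k, hk, hx⟩; exact ⟨k, hx⟩
      · rintro ⟨k, hx⟩; exact ⟨k + 1, k, Nat.lt_succ_self k, hx⟩
    have hj' : (N : ℝ≥0∞)⁻¹ < Q (⋃ K, G K) := by rw [hGunion]; exact hj
    rw [hGmono.measure_iUnion, lt_iSup_iff] at hj'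
    obtain ⟨K, hK⟩ := hj'
    have hcast : ((2 ^ j : ℕ) : ℝ) = (2 : ℝ) ^ j := by push_cast; ring
    have hGeq : (⋃ x ∈ (Finset.range K).image e, Metric.ball x (1 / ((2 ^ j : ℕ) : ℝ))) = G K := by
      rw [hcast, hG]
      ext x
      simp only [mem_iUnion, Finset.mem_image, Finset.mem_range, exists_prop]
      constructor
      · rintro ⟨c, ⟨k, hk, rfl⟩, hx⟩; exact ⟨k, hk, hx⟩
      · rintro ⟨k, hk, hx⟩; exact ⟨e k, ⟨k, hk, rfl⟩, hx⟩
    refine ⟨(Finset.range K).image e, 2 ^ j, ?_, (by positivity), ?_, ?_⟩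
    · intro x hx
      simp only [Finset.coe_image, mem_image, Finset.mem_coe, Finset.mem_range] at hx
      obtain ⟨k, _, rfl⟩ := hx
      have : e k ∈ D j := by rw [he]; exact mem_range_self k
      exact this.1
    · have hGU : G K ⊆ U := by
        refine Subset.trans ?_ (hTsubU j)
        rw [hTj, hG]
        exact iUnion₂_subset fun k _ => subset_iUnion (fun i => Metric.ball (e i) (1 / (2 ^ j : ℝ))) k
      rw [hGeq]
      calc P (G K) ≤ P U := measure_mono hGU
        _ ≤ (n : ℝ≥0∞)⁻¹ := hPU.le
        _ = 1 / (n : ℝ≥0∞) := (one_div _).symm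
    · rw [hGeq, one_div]
      exact hK.le
  · -- backward direction
    rintro ⟨N, hN, h⟩
    intro hQP
    have hchoice : ∀ k : ℕ, ∃ B : Set X, IsOpen B ∧
        P B ≤ ((2 : ℝ≥0∞) ^ k)⁻¹ ∧ (N : ℝ≥0∞)⁻¹ ≤ Q B := by
      intro k
      obtain ⟨s, m, _, _, hP, hQ⟩ := h (2 ^ k) ((by positivity))
      refine ⟨⋃ x ∈ s, Metric.ball x (1 / (m : ℝ)), ?_, ?_, ?_⟩
      · exact isOpen_biUnion fun x _ => Metric.isOpen_ball
      · refine hP.trans_eq ?_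
        rw [one_div]
        congr 1
        push_cast
        ring
      · rw [one_div] at hQ; exact hQ
    choose B hBopen hBP hBQ using hchoice
    have hsum : ∑' k, P (B k) ≠ ∞ := by
      refine ne_top_of_le_ne_top ?_ (ENNReal.tsum_le_tsum hBP)
      have heq : ∀ k : ℕ, ((2 : ℝ≥0∞) ^ k)⁻¹ = (2 : ℝ≥0∞)⁻¹ ^ k := fun k => by
        rw [ENNReal.inv_pow]
      rw [funext heq, ENNReal.tsum_geometric, ENNReal.one_sub_inv_two, inv_inv]
      exact ENNReal.ofNat_ne_top
    have hPlimsup : P (Filter.limsup B Filter.atTop) = 0 :=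
      measure_limsup_atTop_eq_zero hsum
    have hQlimsup : (N : ℝ≥0∞)⁻¹ ≤ Q (Filter.limsup B Filter.atTop) := by
      rw [Filter.limsup_eq_iInf_iSup_of_nat]
      simp only [iInf_eq_iInter, iSup_eq_iUnion]
      have hmeas : ∀ i : ℕ, NullMeasurableSet (⋃ k ≥ i, B k) Q :=
        fun i => (MeasurableSet.biUnion (to_countable _)
          fun k _ => (hBopen k).measurableSet).nullMeasurableSet
      have hanti : Antitone fun i : ℕ => ⋃ k ≥ i, B k := fun a b hab =>
        biUnion_subset_biUnion_left fun k hk => le_trans hab hk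
      rw [hanti.measure_iInter hmeas ⟨0, measure_ne_top Q _⟩]
      refine le_iInf fun i => le_trans (hBQ i) (measure_mono ?_)
      exact subset_biUnion_of_mem (le_refl i)
    have hzero : Q (Filter.limsup B Filter.atTop) = 0 := hQP hPlimsup
    rw [hzero] at hQlimsup
    simp only [nonpos_iff_eq_zero, ENNReal.inv_eq_zero] at hQlimsup
    exact (ENNReal.natCast_ne_top N) hQlimsup
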